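/- For all reals m > 0, a > 0 and b ≥ 0, one has ∫₀^∞ u^{m−1} e^{−a·u} I₀(2√(b·u)) du = (Γ(m)/a^m) · ₁F₁(m; 1; b/a). -/

import Mathlib

open Real MeasureTheory

/-- Rising factorial (Pochhammer symbol) `(a)_k` for a real `a`. -/
noncomputable def risingFactorial (a : ℝ) (k : ℕ) : ℝ :=
  ∏ i ∈ Finset.range k, (a + i)

/-- The Kummer confluent hypergeometric function `₁F₁(a; 1; z)`. -/
noncomputable def kummer1F1 (a z : ℝ) : ℝ :=
  ∑' k : ℕ, risingFactorial a k / (Nat.factorial k : ℝ) ^ 2 * z ^ k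

/-- The modified Bessel function of the first kind of order zero. -/
noncomputable def besselI0 (x : ℝ) : ℝ :=
  ∑' k : ℕ, (x / 2) ^ (2 * k) / (Nat.factorial k : ℝ) ^ 2

lemma risingFactorial_succ (a : ℝ) (k : ℕ) :
    risingFactorial a (k + 1) = risingFactorial a k * (a + k) := by
  simp [risingFactorial, Finset.prod_range_succ]

lemma risingFactorial_pos {a : ℝ} (ha : 0 < a) (k : ℕ) : 0 < risingFactorial a k := by
  apply Finset.prod_pos
  intro i _
  positivity

lemma gamma_risingFactorial {m : ℝ} (hm : 0 < m) (k : ℕ) :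
    Real.Gamma (m + k) = Real.Gamma m * risingFactorial m k := by
  induction k with
  | zero => simp [risingFactorial]
  | succ n ih =>
    have h1 : m + (n + 1 : ℕ) = (m + n) + 1 := by push_cast; ring
    have h2 : m + (n : ℝ) ≠ 0 := by positivity
    rw [h1, Real.Gamma_add_one h2, ih, risingFactorial_succ]
    ring

lemma kummer_summable {m : ℝ} (hm : 0 < m) {c : ℝ} (hc : 0 ≤ c) :
    Summable (fun k : ℕ => risingFactorial m k / (Nat.factorial k : ℝ) ^ 2 * c ^ k) := by
  apply summable_of_ratio_norm_eventually_le (r := 1/2) (by norm_num)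
  have hN : ∀ᶠ k : ℕ in Filter.atTop, 2 * ((m + k) * c) ≤ (k + 1 : ℝ) ^ 2 := by
    filter_upwards [Filter.eventually_ge_atTop (⌈2 * (m + 1) * c⌉₊)] with k hk
    have hk' : 2 * (m + 1) * c ≤ (k : ℝ) := le_trans (Nat.le_ceil _) (by exact_mod_cast hk)
    have hkn : (0 : ℝ) ≤ (k : ℝ) := Nat.cast_nonneg k
    nlinarith [sq_nonneg ((k : ℝ) - 1), mul_nonneg hkn hc, mul_nonneg hm.le hc]
  filter_upwards [hN] with k hk
  have hfk : (0 : ℝ) < (Nat.factorial k : ℝ) := by exact_mod_cast Nat.factorial_pos k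
  have hterm : risingFactorial m (k + 1) / (Nat.factorial (k + 1) : ℝ) ^ 2 * c ^ (k + 1) =
      ((m + k) * c / (k + 1 : ℝ) ^ 2) *
        (risingFactorial m k / (Nat.factorial k : ℝ) ^ 2 * c ^ k) := by
    rw [risingFactorial_succ, Nat.factorial_succ, pow_succ]
    push_cast
    field_simp
    ring
  rw [hterm]
  have hpos : (0 : ℝ) ≤ risingFactorial m k / (Nat.factorial k : ℝ) ^ 2 * c ^ k := by
    have := (risingFactorial_pos hm k).le
    positivity
  rw [norm_mul, Real.norm_of_nonneg hpos]
  have hk1 : (0 : ℝ) < (k + 1 : ℝ) ^ 2 := by positivity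
  have hratio : (m + k) * c / (k + 1 : ℝ) ^ 2 ≤ 1 / 2 := by
    rw [div_le_div_iff₀ hk1 (by norm_num)]
    linarith
  have hratio0 : (0 : ℝ) ≤ (m + k) * c / (k + 1 : ℝ) ^ 2 := by
    have : (0:ℝ) ≤ (m + k) * c := mul_nonneg (by positivity) hc
    positivity
  rw [Real.norm_of_nonneg hratio0]
  exact mul_le_mul_of_nonneg_right hratio hpos

theorem stmt_6 (m a b : ℝ) (hm : 0 < m) (ha : 0 < a) (hb : 0 ≤ b) :
    ∫ u in Set.Ioi (0 : ℝ),
        u ^ (m - 1) * Real.exp (-(a * u)) * besselI0 (2 * Real.sqrt (b * u)) =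
      Real.Gamma m / a ^ m * kummer1F1 m (b / a) := by
  set F : ℕ → ℝ → ℝ := fun k u =>
    u ^ (m - 1) * Real.exp (-(a * u)) * ((b * u) ^ k / (Nat.factorial k : ℝ) ^ 2) with hF
  -- pointwise value of each integral
  have hint : ∀ k : ℕ, IntegrableOn (F k) (Set.Ioi (0 : ℝ)) := by
    intro k
    have base : IntegrableOn (fun u : ℝ => u ^ (m + k - 1) * Real.exp (-a * u))
        (Set.Ioi 0) := by
      have := integrableOn_rpow_mul_exp_neg_mul_rpow (s := m + k - 1) (p := 1) (b := a)
        (by have : (0:ℝ) ≤ (k:ℝ) := Nat.cast_nonneg k; linarith) one_pos ha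
      simpa [Real.rpow_one] using this
    have : IntegrableOn (fun u : ℝ => b ^ k / (Nat.factorial k : ℝ) ^ 2 *
        (u ^ (m + k - 1) * Real.exp (-a * u))) (Set.Ioi 0) := base.const_mul _
    apply this.congr_fun ?_ measurableSet_Ioi
    intro u hu
    have hu' : (0:ℝ) < u := hu
    simp only [hF]
    rw [mul_pow, ← Real.rpow_natCast u k]
    rw [show m + (k:ℝ) - 1 = (m - 1) + (k:ℝ) by ring, Real.rpow_add hu']
    rw [neg_mul]
    ring
  have hval : ∀ k : ℕ, ∫ u in Set.Ioi (0:ℝ), F k u =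
      b ^ k / (Nat.factorial k : ℝ) ^ 2 * ((1 / a) ^ (m + k) * Real.Gamma (m + k)) := by
    intro k
    have hcong : ∀ u ∈ Set.Ioi (0:ℝ), F k u =
        b ^ k / (Nat.factorial k : ℝ) ^ 2 * (u ^ (m + k - 1) * Real.exp (-(a * u))) := by
      intro u hu
      have hu' : (0:ℝ) < u := hu
      simp only [hF]
      rw [mul_pow, ← Real.rpow_natCast u k,
        show m + (k:ℝ) - 1 = (m - 1) + (k:ℝ) by ring, Real.rpow_add hu']
      ring
    rw [setIntegral_congr_fun measurableSet_Ioi hcong, integral_const_mul,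
      integral_rpow_mul_exp_neg_mul_Ioi (by positivity) ha]
  -- norm integrals and summability
  have hC : (0:ℝ) < Real.Gamma m := Real.Gamma_pos_of_pos hm
  have hba : (0:ℝ) ≤ b / a := div_nonneg hb ha.le
  have hg : ∀ k : ℕ, b ^ k / (Nat.factorial k : ℝ) ^ 2 * ((1 / a) ^ (m + k) * Real.Gamma (m + k))
      = (Real.Gamma m / a ^ m) *
        (risingFactorial m k / (Nat.factorial k : ℝ) ^ 2 * (b / a) ^ k) := by
    intro k
    rw [gamma_risingFactorial hm k, Real.rpow_add (by positivity),
      Real.rpow_natCast, one_div, Real.inv_rpow ha.le, inv_pow]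
    field_simp
    rw [div_pow]
    field_simp
  have hsum0 : Summable (fun k : ℕ =>
      risingFactorial m k / (Nat.factorial k : ℝ) ^ 2 * (b / a) ^ k) :=
    kummer_summable hm hba
  have hsum : Summable (fun k : ℕ => ∫ u in Set.Ioi (0:ℝ), ‖F k u‖) := by
    have hnn : ∀ k, (∫ u in Set.Ioi (0:ℝ), ‖F k u‖) = ∫ u in Set.Ioi (0:ℝ), F k u := by
      intro k
      apply setIntegral_congr_fun measurableSet_Ioi
      intro u hu
      have hu' : (0:ℝ) < u := hu
      apply Real.norm_of_nonneg
      have h1 : (0:ℝ) ≤ u ^ (m - 1) := (Real.rpow_pos_of_pos hu' _).le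
      have h2 : (0:ℝ) ≤ b * u := mul_nonneg hb hu'.le
      positivity
    simp only [hnn, hval, hg]
    exact hsum0.mul_left _
  -- rewrite the integrand as a tsum
  have hbes : ∀ u ∈ Set.Ioi (0:ℝ),
      u ^ (m - 1) * Real.exp (-(a * u)) * besselI0 (2 * Real.sqrt (b * u)) =
        ∑' k : ℕ, F k u := by
    intro u hu
    have hu' : (0:ℝ) < u := hu
    have hbu : (0:ℝ) ≤ b * u := mul_nonneg hb hu'.le
    have h1 : besselI0 (2 * Real.sqrt (b * u)) = ∑' k : ℕ, (b * u) ^ k / (Nat.factorial k : ℝ) ^ 2 := by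
      unfold besselI0
      congr 1
      funext k
      rw [show (2 * Real.sqrt (b * u)) / 2 = Real.sqrt (b * u) by ring,
        pow_mul, Real.sq_sqrt hbu]
    rw [h1, ← tsum_mul_left]
  rw [setIntegral_congr_fun measurableSet_Ioi hbes,
    ← MeasureTheory.integral_tsum_of_summable_integral_norm hint hsum]
  calc (∑' k : ℕ, ∫ u in Set.Ioi (0:ℝ), F k u)
      = ∑' k : ℕ, (Real.Gamma m / a ^ m) *
          (risingFactorial m k / (Nat.factorial k : ℝ) ^ 2 * (b / a) ^ k) := by
        exact tsum_congr fun k => by rw [hval k, hg k]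
    _ = Real.Gamma m / a ^ m * kummer1F1 m (b / a) := by
        rw [tsum_mul_left]; rfl
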